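/- arXiv:1907.08420 — 5 statements merged into one kernel-verified Lean document; each statement's English description precedes it below -/
import Mathlib

section
/- Let 1 ≤ p < ∞, let μ be a σ-finite positive Borel measure on (0,∞), and let f ∈ A^p(𝕌). If ∫_0^∞ t^{2/p − 1} dμ(t) < ∞, then for every z ∈ 𝕌 the integral H_μ(f)(z) = ∫_0^∞ (1/t) f(z/t) dμ(t) converges absolutely, and the function z ↦ H_μ(f)(z) is a well-defined holomorphic function on 𝕌. -/
open MeasureTheory Complex Set Filter Metric
open scoped ENNReal NNReal Topology Real

noncomputable section

/-- The upper half plane `{z : ℂ | Im z > 0}`. -/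
def UHP : Set ℂ := {z : ℂ | 0 < z.im}

lemma isOpen_UHP : IsOpen UHP := isOpen_lt continuous_const Complex.continuous_im

lemma im_ge_of_mem_closedBall {c w : ℂ} {R : ℝ} (hw : w ∈ Metric.closedBall c R) :
    c.im - R ≤ w.im := by
  have h1 : |w.im - c.im| ≤ dist w c := by
    rw [Complex.dist_eq]
    simpa [Complex.sub_im] using Complex.abs_im_le_norm (w - c)
  have := (abs_le.1 (h1.trans hw)).1
  linarith

lemma closedBall_subset_UHP {c : ℂ} {R : ℝ} (h : R < c.im) : Metric.closedBall c R ⊆ UHP := by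
  intro w hw
  have := im_ge_of_mem_closedBall hw
  show 0 < w.im
  linarith

lemma circleMVP {f : ℂ → ℂ} (hf : DifferentiableOn ℂ f UHP) {c : ℂ} {r : ℝ}
    (hr : 0 < r) (hsub : Metric.closedBall c r ⊆ UHP) :
    ∫ θ in (-π)..π, f (circleMap c r θ) = (2 * π) • f c := by
  have hC : ContinuousOn f (Metric.closedBall c r) := hf.continuousOn.mono hsub
  have hD : ∀ z ∈ Metric.ball c r \ (∅ : Set ℂ), DifferentiableAt ℂ f z := fun z hz =>
    hf.differentiableAt (isOpen_UHP.mem_nhds (hsub (Metric.ball_subset_closedBall hz.1)))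
  have key := Complex.circleIntegral_sub_center_inv_smul_of_differentiable_on_off_countable hr
    Set.countable_empty hC hD
  rw [circleIntegral] at key
  have h1 : ∀ θ : ℝ, deriv (circleMap c r) θ • (circleMap c r θ - c)⁻¹ • f (circleMap c r θ)
      = I • f (circleMap c r θ) := by
    intro θ
    rw [deriv_circleMap, circleMap_sub_center]
    have hne : circleMap 0 r θ ≠ 0 := by
      simp [circleMap, hr.ne', Complex.exp_ne_zero]
    simp only [smul_eq_mul]
    field_simp
  simp only [h1] at key
  rw [intervalIntegral.integral_smul] at key
  have hI : (I : ℂ) ≠ 0 := I_ne_zero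
  have key2 : ∫ θ in (0:ℝ)..(2*π), f (circleMap c r θ) = (2 * π) • f c := by
    have : (I : ℂ) • ∫ θ in (0:ℝ)..(2*π), f (circleMap c r θ)
        = I • ((2 * π : ℝ) • f c) := by
      rw [key]; simp only [smul_eq_mul, real_smul]; push_cast; ring
    exact smul_right_injective ℂ hI this
  rw [← key2]
  have hper : Function.Periodic (fun θ => f (circleMap c r θ)) (2 * π) :=
    (periodic_circleMap c r).comp f
  have h2 := hper.intervalIntegral_add_eq (-π) 0
  rw [show -π + 2 * π = π by ring, show (0:ℝ) + 2 * π = 2 * π by ring] at h2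
  exact h2

set_option maxHeartbeats 1000000 in
lemma discMVP {f : ℂ → ℂ} (hf : DifferentiableOn ℂ f UHP) {c : ℂ} {R : ℝ}
    (hR : 0 < R) (hsub : Metric.closedBall c R ⊆ UHP) :
    ∫ z in Metric.ball c R, f z = (π * R ^ 2) • f c := by
  have hcont : ContinuousOn f (Metric.closedBall c R) := hf.continuousOn.mono hsub
  set F : ℂ → ℂ := (Metric.ball (0:ℂ) R).indicator (fun w => f (c + w)) with hF
  set G : ℝ × ℝ → ℂ := fun q => q.1 • f (c + q.1 * Complex.exp (q.2 * Complex.I)) with hG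
  -- step 1: translate
  have step1 : ∫ z in Metric.ball c R, f z = ∫ z, F z := by
    rw [← integral_indicator measurableSet_ball]
    rw [← integral_add_left_eq_self (fun z => (Metric.ball c R).indicator f z) c]
    congr 1
    funext z
    rw [hF]
    by_cases hz : z ∈ Metric.ball (0:ℂ) R
    · have : c + z ∈ Metric.ball c R := by
        simpa [Metric.mem_ball, dist_eq_norm] using hz
      rw [indicator_of_mem hz, indicator_of_mem this]
    · have : c + z ∉ Metric.ball c R := by
        simpa [Metric.mem_ball, dist_eq_norm] using hz
      rw [indicator_of_notMem hz, indicator_of_notMem this]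
  -- step 2: polar coordinates
  have step2 : ∫ z, F z = ∫ q in polarCoord.target, q.1 • F (Complex.polarCoord.symm q) :=
    (Complex.integral_comp_polarCoord_symm F).symm
  -- symm formula
  have hsymm : ∀ q : ℝ × ℝ, Complex.polarCoord.symm q = q.1 * Complex.exp (q.2 * Complex.I) := by
    intro q
    rw [Complex.polarCoord_symm_apply, Complex.exp_mul_I]
    push_cast
    ring
  have habs : ∀ q : ℝ × ℝ, ‖Complex.polarCoord.symm q‖ = |q.1| := fun q =>
    Complex.norm_polarCoord_symm q
  -- step 3: indicator juggling
  have step3 : ∫ q in polarCoord.target, q.1 • F (Complex.polarCoord.symm q)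
      = ∫ q in Ioo (0:ℝ) R ×ˢ Ioo (-π) π, G q := by
    rw [← integral_indicator (polarCoord.open_target.measurableSet),
      ← integral_indicator (measurableSet_Ioo.prod measurableSet_Ioo)]
    congr 1
    funext q
    by_cases hq : q ∈ Ioo (0:ℝ) R ×ˢ Ioo (-π) π
    · obtain ⟨hq1, hq2⟩ := hq
      have hqt : q ∈ polarCoord.target := by
        rw [polarCoord_target]
        exact ⟨hq1.1, hq2⟩
      rw [indicator_of_mem hqt, indicator_of_mem (by exact ⟨hq1, hq2⟩)]
      have hmem : Complex.polarCoord.symm q ∈ Metric.ball (0:ℂ) R := by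
        rw [mem_ball_zero_iff, habs, abs_of_pos hq1.1]
        exact hq1.2
      rw [hsymm q] at hmem
      rw [hF, hsymm q, indicator_of_mem hmem]
    · rw [indicator_of_notMem hq]
      by_cases hqt : q ∈ polarCoord.target
      · rw [indicator_of_mem hqt]
        rw [polarCoord_target] at hqt
        have hq1R : R ≤ q.1 := by
          by_contra hlt
          push_neg at hlt
          exact hq ⟨⟨hqt.1, hlt⟩, hqt.2⟩
        have hnmem : Complex.polarCoord.symm q ∉ Metric.ball (0:ℂ) R := by
          rw [mem_ball_zero_iff, habs, abs_of_pos hqt.1]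
          exact not_lt.2 hq1R
        rw [hF, indicator_of_notMem hnmem, smul_zero]
      · rw [indicator_of_notMem hqt]
  -- integrability of G on the product
  have hGint : IntegrableOn G (Ioo (0:ℝ) R ×ˢ Ioo (-π) π) volume := by
    have hGc : ContinuousOn G (Icc (0:ℝ) R ×ˢ Icc (-π) π) := by
      have hmap : MapsTo (fun q : ℝ × ℝ => c + ↑q.1 * Complex.exp (↑q.2 * Complex.I))
          (Icc (0:ℝ) R ×ˢ Icc (-π) π) (Metric.closedBall c R) := by
        intro q hq
        rw [Metric.mem_closedBall, dist_eq_norm]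
        have : ‖(↑q.1 * Complex.exp (↑q.2 * Complex.I) : ℂ)‖ ≤ R := by
          rw [norm_mul, Complex.norm_real, Complex.norm_exp_ofReal_mul_I, mul_one,
            Real.norm_eq_abs, _root_.abs_of_nonneg hq.1.1]
          exact hq.1.2
        simpa using this
      have hinner : Continuous (fun q : ℝ × ℝ => c + ↑q.1 * Complex.exp (↑q.2 * Complex.I)) :=
        continuous_const.add ((Complex.continuous_ofReal.comp continuous_fst).mul
          (Complex.continuous_exp.comp ((Complex.continuous_ofReal.comp continuous_snd).mul
            continuous_const)))
      exact (continuous_fst.continuousOn).smul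
        ((hcont.comp hinner.continuousOn hmap))
    exact (hGc.integrableOn_compact (isCompact_Icc.prod isCompact_Icc)).mono_set
      (prod_mono Ioo_subset_Icc_self Ioo_subset_Icc_self)
  -- step 4: Fubini
  have step4 : ∫ q in Ioo (0:ℝ) R ×ˢ Ioo (-π) π, G q
      = ∫ r in Ioo (0:ℝ) R, ∫ θ in Ioo (-π) π, G (r, θ) := by
    rw [Measure.volume_eq_prod] at hGint ⊢
    exact setIntegral_prod G hGint
  -- step 5: inner integral via circle MVP
  have step5 : ∀ r ∈ Ioo (0:ℝ) R, ∫ θ in Ioo (-π) π, G (r, θ) = (2 * π * r) • f c := by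
    intro r hr
    have hsub' : Metric.closedBall c r ⊆ UHP :=
      (Metric.closedBall_subset_closedBall hr.2.le).trans hsub
    have : ∀ θ : ℝ, G (r, θ) = r • f (circleMap c r θ) := by
      intro θ
      simp only [hG, circleMap]
    simp only [this]
    rw [← integral_Ioc_eq_integral_Ioo, ← intervalIntegral.integral_of_le (by linarith [Real.pi_pos] : -π ≤ π)]
    rw [intervalIntegral.integral_smul, circleMVP hf hr.1 hsub', smul_smul]
    congr 1
    ring
  -- step 6: outer integral
  have step6 : ∫ r in Ioo (0:ℝ) R, ∫ θ in Ioo (-π) π, G (r, θ) = (π * R ^ 2) • f c := by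
    rw [setIntegral_congr_fun measurableSet_Ioo step5]
    have : ∫ r in Ioo (0:ℝ) R, (2 * π * r) • f c
        = (∫ r in Ioo (0:ℝ) R, 2 * π * r) • f c := by
      rw [integral_smul_const]
    rw [this]
    congr 1
    rw [← integral_Ioc_eq_integral_Ioo, ← intervalIntegral.integral_of_le hR.le]
    rw [intervalIntegral.integral_const_mul, integral_id]
    ring
  rw [step1, step2, step3, step4, step6]

lemma ptBound {p : ℝ} (hp : 1 ≤ p) {f : ℂ → ℂ} (hf : DifferentiableOn ℂ f UHP) {c : ℂ} {R : ℝ}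
    (hR : 0 < R) (hsub : Metric.closedBall c R ⊆ UHP) :
    (‖f c‖₊ : ℝ≥0∞) ≤ (∫⁻ z in UHP, (‖f z‖₊ : ℝ≥0∞) ^ p) ^ (1/p)
      * ENNReal.ofReal (π * R ^ 2) ^ (-(1/p)) := by
  have hp0 : 0 < p := lt_of_lt_of_le zero_lt_one hp
  set u : ℝ≥0∞ := ENNReal.ofReal (π * R ^ 2) with hu
  have hπR : 0 < π * R ^ 2 := by positivity
  have hu0 : u ≠ 0 := (ENNReal.ofReal_pos.mpr hπR).ne'
  have huT : u ≠ ⊤ := ENNReal.ofReal_ne_top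
  have hballsub : Metric.ball c R ⊆ UHP := Metric.ball_subset_closedBall.trans hsub
  have hvol : volume (Metric.ball c R) = u := by
    rw [Complex.volume_ball, hu, ENNReal.ofReal_mul Real.pi_pos.le,
      ← ENNReal.ofReal_pow hR.le, ← NNReal.coe_real_pi, ENNReal.ofReal_coe_nnreal, mul_comm]
  have key1 : u * (‖f c‖₊ : ℝ≥0∞) = (‖∫ z in Metric.ball c R, f z‖₊ : ℝ≥0∞) := by
    rw [discMVP hf hR hsub, nnnorm_smul, ENNReal.coe_mul, ← enorm_eq_nnnorm (π * R ^ 2), Real.enorm_eq_ofReal hπR.le]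
  have key2 : (‖∫ z in Metric.ball c R, f z‖₊ : ℝ≥0∞)
      ≤ ∫⁻ z in Metric.ball c R, (‖f z‖₊ : ℝ≥0∞) :=
    enorm_integral_le_lintegral_enorm _
  have hmeas : AEStronglyMeasurable f (volume.restrict (Metric.ball c R)) :=
    (hf.continuousOn.mono hballsub).aestronglyMeasurable measurableSet_ball
  have holder : ∫⁻ z in Metric.ball c R, (‖f z‖₊ : ℝ≥0∞)
      ≤ (∫⁻ z in Metric.ball c R, (‖f z‖₊ : ℝ≥0∞) ^ p) ^ (1/p) * u ^ (1 - 1/p) := by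
    rcases eq_or_lt_of_le hp with heq | hlt
    · simp [← heq]
    · set q := p / (p - 1) with hq
      have hp1 : p - 1 ≠ 0 := sub_ne_zero.2 hlt.ne'
      have hpq : p.HolderConjugate q := Real.HolderConjugate.conjExponent hlt
      have h := ENNReal.lintegral_mul_le_Lp_mul_Lq (volume.restrict (Metric.ball c R)) hpq
        hmeas.enorm (aemeasurable_const (b := (1:ℝ≥0∞)))
      simp only [Pi.mul_apply, mul_one, ENNReal.one_rpow, lintegral_const,
        Measure.restrict_apply_univ, one_mul] at h
      rw [hvol] at h
      refine h.trans (le_of_eq ?_)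
      congr 1
      rw [one_div, one_div, ← hpq.one_sub_inv]
  have hmono : (∫⁻ z in Metric.ball c R, (‖f z‖₊ : ℝ≥0∞) ^ p)
      ≤ ∫⁻ z in UHP, (‖f z‖₊ : ℝ≥0∞) ^ p := lintegral_mono_set hballsub
  set Ip := ∫⁻ z in UHP, (‖f z‖₊ : ℝ≥0∞) ^ p with hIp
  have h4 : u * (‖f c‖₊ : ℝ≥0∞) ≤ Ip ^ (1/p) * u ^ (1 - 1/p) := by
    rw [key1]
    refine key2.trans (holder.trans ?_)
    exact mul_le_mul_left (ENNReal.rpow_le_rpow hmono (by positivity)) _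
  have h5 : (‖f c‖₊ : ℝ≥0∞) = u⁻¹ * (u * (‖f c‖₊ : ℝ≥0∞)) := by
    rw [← mul_assoc, ENNReal.inv_mul_cancel hu0 huT, one_mul]
  calc (‖f c‖₊ : ℝ≥0∞) = u⁻¹ * (u * (‖f c‖₊ : ℝ≥0∞)) := h5
    _ ≤ u⁻¹ * (Ip ^ (1/p) * u ^ (1 - 1/p)) := mul_le_mul_right h4 _
    _ = Ip ^ (1/p) * (u ^ (1 - 1/p) * u ^ (-(1:ℝ))) := by
        rw [ENNReal.rpow_neg_one]; ring
    _ = Ip ^ (1/p) * u ^ (-(1/p)) := by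
        rw [← ENNReal.rpow_add _ _ hu0 huT]
        congr 1
        ring

lemma exists_pointwise_bound {p : ℝ} (hp : 1 ≤ p) {f : ℂ → ℂ}
    (hf : DifferentiableOn ℂ f UHP)
    (hI : (∫⁻ z in UHP, (‖f z‖₊ : ℝ≥0∞) ^ p) < ⊤) :
    ∃ C : ℝ, 0 ≤ C ∧ (∀ c ∈ UHP, ‖f c‖ ≤ C * c.im ^ (-(2/p)))
      ∧ (∀ c ∈ UHP, ‖deriv f c‖ ≤ (C * 2 ^ (2/p + 1)) * c.im ^ (-(2/p) - 1)) := by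
  have hp0 : 0 < p := lt_of_lt_of_le zero_lt_one hp
  set Ip := ∫⁻ z in UHP, (‖f z‖₊ : ℝ≥0∞) ^ p with hIp
  set C : ℝ := (Ip ^ (1/p)).toReal * (4/π) ^ (1/p) with hCdef
  have hC : 0 ≤ C := mul_nonneg ENNReal.toReal_nonneg (Real.rpow_nonneg (by positivity) _)
  have hbound : ∀ c ∈ UHP, ‖f c‖ ≤ C * c.im ^ (-(2/p)) := by
    intro c hc
    have him : (0:ℝ) < c.im := hc
    have hRpos : (0:ℝ) < c.im / 2 := by linarith
    have hsub : Metric.closedBall c (c.im/2) ⊆ UHP := closedBall_subset_UHP (by linarith)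
    have hpt := ptBound hp hf hRpos hsub
    have hπR : (0:ℝ) < π * (c.im/2) ^ 2 := by positivity
    rw [ENNReal.ofReal_rpow_of_pos hπR] at hpt
    have hne : Ip ^ (1/p) ≠ ⊤ := ENNReal.rpow_ne_top_of_nonneg (by positivity) hI.ne
    have hs : (0:ℝ) ≤ (π * (c.im/2)^2) ^ (-(1/p)) := Real.rpow_nonneg hπR.le _
    have h2 : ‖f c‖ ≤ (Ip ^ (1/p)).toReal * (π * (c.im/2)^2) ^ (-(1/p)) := by
      have := ENNReal.toReal_mono (by
        exact ENNReal.mul_ne_top hne ENNReal.ofReal_ne_top) hpt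
      rwa [ENNReal.toReal_mul, ENNReal.toReal_ofReal hs, ENNReal.coe_toReal, coe_nnnorm] at this
    refine h2.trans (le_of_eq ?_)
    have key : (π * (c.im/2)^2) ^ (-(1/p)) = (4/π)^(1/p) * c.im ^ (-(2/p)) := by
      have h1 : π * (c.im/2)^2 = (π/4) * (c.im^2) := by ring
      rw [h1, Real.mul_rpow (by positivity) (by positivity)]
      congr 1
      · rw [Real.rpow_neg (by positivity), ← Real.inv_rpow (by positivity), inv_div]
      · rw [← Real.rpow_natCast c.im 2, ← Real.rpow_mul him.le]
        congr 1
        push_cast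
        ring
    rw [key, hCdef]
    ring
  refine ⟨C, hC, hbound, ?_⟩
  intro c hc
  have him : (0:ℝ) < c.im := hc
  have hRpos : (0:ℝ) < c.im / 2 := by linarith
  have hsub : Metric.closedBall c (c.im/2) ⊆ UHP := closedBall_subset_UHP (by linarith)
  have hd : DiffContOnCl ℂ f (Metric.ball c (c.im/2)) := hf.diffContOnCl_ball hsub
  have hC2 : ∀ w ∈ Metric.sphere c (c.im/2), ‖f w‖ ≤ C * (c.im/2) ^ (-(2/p)) := by
    intro w hw
    have hw' : w ∈ Metric.closedBall c (c.im/2) := Metric.sphere_subset_closedBall hw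
    have hwim : c.im / 2 ≤ w.im := by
      have := im_ge_of_mem_closedBall hw'
      linarith
    have hwU : w ∈ UHP := hsub hw'
    refine (hbound w hwU).trans ?_
    refine mul_le_mul_of_nonneg_left ?_ hC
    have hexp : -(2/p) ≤ 0 := by
      have : (0:ℝ) ≤ 2/p := by positivity
      linarith
    exact Real.rpow_le_rpow_of_nonpos hRpos hwim hexp
  have hder := Complex.norm_deriv_le_of_forall_mem_sphere_norm_le hRpos hd hC2
  refine hder.trans (le_of_eq ?_)
  have hsplit : (c.im/2) ^ (-(2/p)) / (c.im/2) = (c.im/2) ^ (-(2/p) - 1) := by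
    rw [div_eq_mul_inv, ← Real.rpow_neg_one (c.im/2), ← Real.rpow_add hRpos,
      show -(2/p) + -1 = -(2/p) - 1 by ring]
  have hfin : (c.im/2) ^ (-(2/p) - 1) = 2 ^ (2/p + 1) * c.im ^ (-(2/p) - 1) := by
    rw [Real.div_rpow him.le (by norm_num : (0:ℝ) ≤ 2), div_eq_mul_inv,
      ← Real.rpow_neg (by norm_num : (0:ℝ) ≤ 2), show -(-(2/p) - 1) = 2/p + 1 by ring]
    ring
  rw [mul_div_assoc, hsplit, hfin]
  ring

/-- The `p`-th power of the Bergman `A^p(UHP)` norm: `(1/π) ∫_UHP |f|^p dA`. -/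
def apNormPow (p : ℝ) (f : ℂ → ℂ) : ℝ≥0∞ :=
  ENNReal.ofReal (1 / Real.pi) * ∫⁻ z in UHP, (‖f z‖₊ : ℝ≥0∞) ^ p

/-- The Bergman `A^p(UHP)` norm: `((1/π) ∫_UHP |f|^p dA)^(1/p)`. -/
def apNorm (p : ℝ) (f : ℂ → ℂ) : ℝ≥0∞ := apNormPow p f ^ (1 / p)

/-- Membership in the Bergman space `A^p(UHP)`: holomorphic on `UHP` with finite norm. -/
def MemAp (p : ℝ) (f : ℂ → ℂ) : Prop :=
  DifferentiableOn ℂ f UHP ∧ apNormPow p f < ⊤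

/-- The Hausdorff operator `H_μ f z = ∫_0^∞ (1/t) f(z/t) dμ(t)`. -/
def hausdorffOp (μ : Measure ℝ) (f : ℂ → ℂ) (z : ℂ) : ℂ :=
  ∫ t in Ioi (0:ℝ), (t : ℂ)⁻¹ * f (z / (t : ℂ)) ∂μ

lemma integrableOn_of_bound {E : Type*} [NormedAddCommGroup E] (μ : Measure ℝ) (e : ℝ)
    (hμ : ∫⁻ t in Ioi (0:ℝ), ENNReal.ofReal (t ^ e) ∂μ < ⊤)
    (g : ℝ → E) (hmeas : AEStronglyMeasurable g (μ.restrict (Ioi 0)))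
    {D : ℝ} (hD : 0 ≤ D) (hbd : ∀ t ∈ Ioi (0:ℝ), ‖g t‖ ≤ D * t ^ e) :
    IntegrableOn g (Ioi 0) μ := by
  refine ⟨hmeas, ?_⟩
  rw [hasFiniteIntegral_iff_norm]
  calc ∫⁻ t in Ioi 0, ENNReal.ofReal ‖g t‖ ∂μ
      ≤ ∫⁻ t in Ioi 0, ENNReal.ofReal D * ENNReal.ofReal (t ^ e) ∂μ := by
        refine lintegral_mono_ae ?_
        filter_upwards [ae_restrict_mem measurableSet_Ioi] with t ht
        rw [← ENNReal.ofReal_mul hD]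
        exact ENNReal.ofReal_le_ofReal (hbd t ht)
    _ = ENNReal.ofReal D * ∫⁻ t in Ioi 0, ENNReal.ofReal (t ^ e) ∂μ :=
        lintegral_const_mul' _ _ ENNReal.ofReal_ne_top
    _ < ⊤ := ENNReal.mul_lt_top ENNReal.ofReal_lt_top hμ

theorem stmt0 (p : ℝ) (hp : 1 ≤ p) (μ : Measure ℝ) [SigmaFinite μ]
    (f : ℂ → ℂ) (hf : MemAp p f)
    (hμ : ∫⁻ t in Ioi (0:ℝ), ENNReal.ofReal (t ^ (2 / p - 1)) ∂μ < ⊤) :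
    (∀ z ∈ UHP, IntegrableOn (fun t : ℝ => (t : ℂ)⁻¹ * f (z / (t : ℂ))) (Ioi 0) μ) ∧
    DifferentiableOn ℂ (hausdorffOp μ f) UHP := by
  obtain ⟨hfd, hA⟩ := hf
  have hp0 : 0 < p := lt_of_lt_of_le zero_lt_one hp
  have hI : (∫⁻ z in UHP, (‖f z‖₊ : ℝ≥0∞) ^ p) < ⊤ := by
    by_contra h
    rw [not_lt, top_le_iff] at h
    rw [apNormPow, h, ENNReal.mul_top (by
      simp only [ne_eq, ENNReal.ofReal_eq_zero, not_le]
      positivity)] at hA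
    exact (lt_irrefl _ hA).elim
  obtain ⟨C, hC, hbd, hbd'⟩ := exists_pointwise_bound hp hfd hI
  set C1 : ℝ := C * 2 ^ (2/p + 1) with hC1def
  have hC1 : 0 ≤ C1 := mul_nonneg hC (Real.rpow_nonneg (by norm_num) _)
  have hfc : ContinuousOn f UHP := hfd.continuousOn
  have hderivc : ContinuousOn (deriv f) UHP :=
    ((hfd.analyticOnNhd isOpen_UHP).deriv).continuousOn
  have hmem : ∀ {z : ℂ}, z ∈ UHP → ∀ t ∈ Ioi (0:ℝ), z / (t:ℂ) ∈ UHP := by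
    intro z hz t ht
    show 0 < (z / (t:ℂ)).im
    rw [Complex.div_ofReal_im]
    exact div_pos hz ht
  have hinnerC : ∀ z : ℂ, ContinuousOn (fun t : ℝ => z / (t:ℂ)) (Ioi 0) := by
    intro z
    exact continuousOn_const.div (Complex.continuous_ofReal.continuousOn)
      (fun t ht => by exact_mod_cast (ne_of_gt (show (0:ℝ) < t from ht)))
  have hinvC : ContinuousOn (fun t : ℝ => ((t:ℂ))⁻¹) (Ioi 0) :=
    (Complex.continuous_ofReal.continuousOn).inv₀
      (fun t ht => by exact_mod_cast (ne_of_gt (show (0:ℝ) < t from ht)))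
  have hmeasG : ∀ z ∈ UHP, AEStronglyMeasurable (fun t : ℝ => ((t:ℂ))⁻¹ * f (z / (t:ℂ)))
      (μ.restrict (Ioi 0)) := by
    intro z hz
    refine ContinuousOn.aestronglyMeasurable ?_ measurableSet_Ioi
    exact hinvC.mul (hfc.comp (hinnerC z) (fun t ht => hmem hz t ht))
  -- norm computations
  have hnorminv : ∀ t ∈ Ioi (0:ℝ), ‖((t:ℂ))⁻¹‖ = t⁻¹ := by
    intro t ht
    rw [norm_inv, Complex.norm_real, Real.norm_eq_abs, _root_.abs_of_pos ht]
  have hint : ∀ z ∈ UHP, IntegrableOn (fun t : ℝ => ((t:ℂ))⁻¹ * f (z / (t:ℂ))) (Ioi 0) μ := by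
    intro z hz
    have hzim : (0:ℝ) < z.im := hz
    refine integrableOn_of_bound μ (2/p - 1) hμ _ (hmeasG z hz)
      (D := C * z.im ^ (-(2/p))) (mul_nonneg hC (Real.rpow_nonneg hzim.le _)) ?_
    intro t ht
    have htpos : (0:ℝ) < t := ht
    have h2 : ‖f (z / (t:ℂ))‖ ≤ C * (z.im / t) ^ (-(2/p)) := by
      have := hbd (z / (t:ℂ)) (hmem hz t ht)
      rwa [Complex.div_ofReal_im] at this
    have e1 : (z.im / t) ^ (-(2/p)) = z.im ^ (-(2/p)) * t ^ (2/p) := by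
      rw [Real.div_rpow hzim.le htpos.le, div_eq_mul_inv, ← Real.rpow_neg htpos.le, neg_neg]
    have e2 : t⁻¹ * t ^ (2/p) = t ^ (2/p - 1) := by
      rw [← Real.rpow_neg_one t, ← Real.rpow_add htpos, show -1 + 2/p = 2/p - 1 by ring]
    calc ‖((t:ℂ))⁻¹ * f (z / (t:ℂ))‖ = t⁻¹ * ‖f (z / (t:ℂ))‖ := by
          rw [norm_mul, hnorminv t ht]
      _ ≤ t⁻¹ * (C * (z.im / t) ^ (-(2/p))) :=
          mul_le_mul_of_nonneg_left h2 (by positivity)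
      _ = C * z.im ^ (-(2/p)) * t ^ (2/p - 1) := by
          rw [e1, ← e2]; ring
  refine ⟨hint, ?_⟩
  intro z₀ hz₀
  have hz₀im : (0:ℝ) < z₀.im := hz₀
  set ε : ℝ := z₀.im / 2 with hεdef
  have hεpos : 0 < ε := by positivity
  have hballinfo : ∀ z ∈ Metric.ball z₀ ε, ε ≤ z.im ∧ z ∈ UHP := by
    intro z hz
    have h1 : |z.im - z₀.im| ≤ dist z z₀ := by
      rw [Complex.dist_eq]
      simpa [Complex.sub_im] using Complex.abs_im_le_norm (z - z₀)
    have h2 := (abs_le.1 (h1.trans (le_of_lt hz))).1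
    have h3 : ε ≤ z.im := by
      rw [hεdef] at *
      linarith
    exact ⟨h3, show 0 < z.im by linarith⟩
  set F' : ℂ → ℝ → ℂ := fun z t => ((t:ℂ))⁻¹ * (deriv f (z / (t:ℂ)) * ((t:ℂ))⁻¹) with hF'def
  set D : ℝ := (C1 * ε ^ (-(2/p) - 1)) with hDdef
  have hD : 0 ≤ D := mul_nonneg hC1 (Real.rpow_nonneg hεpos.le _)
  have hmeas' : AEStronglyMeasurable (F' z₀) (μ.restrict (Ioi 0)) := by
    refine ContinuousOn.aestronglyMeasurable ?_ measurableSet_Ioi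
    exact hinvC.mul ((hderivc.comp (hinnerC z₀) (fun t ht => hmem hz₀ t ht)).mul hinvC)
  have hbddF' : ∀ᵐ t ∂(μ.restrict (Ioi 0)), ∀ z ∈ Metric.ball z₀ ε,
      ‖F' z t‖ ≤ D * t ^ (2/p - 1) := by
    filter_upwards [ae_restrict_mem measurableSet_Ioi] with t ht
    intro z hz
    obtain ⟨hεle, hzU⟩ := hballinfo z hz
    have hzim : (0:ℝ) < z.im := hzU
    have htpos : (0:ℝ) < t := ht
    have h2 : ‖deriv f (z / (t:ℂ))‖ ≤ C1 * (z.im / t) ^ (-(2/p) - 1) := by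
      have := hbd' (z / (t:ℂ)) (hmem hzU t ht)
      rwa [Complex.div_ofReal_im] at this
    have h3 : (z.im / t) ^ (-(2/p) - 1) ≤ (ε / t) ^ (-(2/p) - 1) := by
      refine Real.rpow_le_rpow_of_nonpos (div_pos hεpos htpos) ?_ ?_
      · gcongr
      · have : (0:ℝ) ≤ 2/p := by positivity
        linarith
    have e1 : (ε / t) ^ (-(2/p) - 1) = ε ^ (-(2/p) - 1) * t ^ (2/p + 1) := by
      rw [Real.div_rpow hεpos.le htpos.le, div_eq_mul_inv, ← Real.rpow_neg htpos.le,
        show -(-(2/p) - 1) = 2/p + 1 by ring]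
    have e2 : t⁻¹ * t ^ (2/p + 1) * t⁻¹ = t ^ (2/p - 1) := by
      rw [← Real.rpow_neg_one t, ← Real.rpow_add htpos, ← Real.rpow_add htpos,
        show -1 + (2/p + 1) + -1 = 2/p - 1 by ring]
    calc ‖F' z t‖ = t⁻¹ * ‖deriv f (z / (t:ℂ))‖ * t⁻¹ := by
          rw [hF'def]
          simp only [norm_mul, hnorminv t ht]
          ring
      _ ≤ t⁻¹ * (C1 * (ε / t) ^ (-(2/p) - 1)) * t⁻¹ := by
          have hle := h2.trans (mul_le_mul_of_nonneg_left h3 hC1)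
          have ht1 : (0:ℝ) ≤ t⁻¹ := by positivity
          exact mul_le_mul_of_nonneg_right (mul_le_mul_of_nonneg_left hle ht1) ht1
      _ = D * t ^ (2/p - 1) := by
          rw [e1, ← e2, hDdef]; ring
  have hbint : Integrable (fun t : ℝ => D * t ^ (2/p - 1)) (μ.restrict (Ioi 0)) := by
    refine integrableOn_of_bound μ (2/p - 1) hμ _ ?_ (D := D) hD ?_
    · refine ContinuousOn.aestronglyMeasurable ?_ measurableSet_Ioi
      exact continuousOn_const.mul (continuousOn_id.rpow_const
        (fun t ht => Or.inl (ne_of_gt (show (0:ℝ) < t from ht))))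
    · intro t ht
      have htpos : (0:ℝ) < t := ht
      rw [Real.norm_eq_abs, _root_.abs_of_nonneg (mul_nonneg hD (Real.rpow_nonneg htpos.le _))]
  have hdiff : ∀ᵐ (t : ℝ) ∂(μ.restrict (Ioi 0)), ∀ z ∈ Metric.ball z₀ ε,
      HasDerivAt (fun w => ((t:ℂ))⁻¹ * f (w / (t:ℂ))) (F' z t) z := by
    filter_upwards [ae_restrict_mem measurableSet_Ioi] with t ht
    intro z hz
    obtain ⟨_, hzU⟩ := hballinfo z hz
    have htpos : (0:ℝ) < t := ht
    have htne : ((t:ℝ):ℂ) ≠ 0 := by exact_mod_cast ne_of_gt htpos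
    have hfd' : DifferentiableAt ℂ f (z / (t:ℂ)) :=
      hfd.differentiableAt (isOpen_UHP.mem_nhds (hmem hzU t ht))
    have hin : HasDerivAt (fun w : ℂ => w / ((t:ℝ):ℂ)) (((t:ℝ):ℂ))⁻¹ z := by
      simpa [one_div] using (hasDerivAt_id z).div_const ((t:ℝ):ℂ)
    have hcomp := (hfd'.hasDerivAt.comp z hin)
    have := hcomp.const_mul (((t:ℝ):ℂ))⁻¹
    simpa [hF'def, Function.comp] using this
  have key := hasDerivAt_integral_of_dominated_loc_of_deriv_le (μ := μ.restrict (Ioi 0))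
    (F := fun z (t : ℝ) => ((t:ℂ))⁻¹ * f (z / (t:ℂ))) (F' := F')
    (bound := fun t => D * t ^ (2/p - 1)) (Metric.ball_mem_nhds z₀ hεpos)
    (Filter.eventually_of_mem (isOpen_UHP.mem_nhds hz₀) (fun z hz => hmeasG z hz))
    (hint z₀ hz₀) hmeas' hbddF' hbint hdiff
  exact (key.2.differentiableAt).differentiableWithinAt
end
end

section
/- Let λ > 0 and δ > 0, and let g_{λ,δ}(z) = |z + δi|^{-(2+λ)/p}, so that ||g_{λ,δ}||_{L^p(dA)}^p = (1/π)∫_𝕌 |z + δi|^{-(2+λ)} dA(z). Then (1/2)^{2+λ} · 1/(λ δ^λ) ≤ ||g_{λ,δ}||_{L^p(dA)}^p ≤ 2^{(2+λ)/2} · 1/(λ δ^λ). -/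
open MeasureTheory Complex Set Filter
open scoped ENNReal NNReal Topology Real

noncomputable section

theorem aux_lint_shift {a : ℝ} (ha : a < -1) {c : ℝ} (hc : 0 < c) :
    ∫⁻ y in Ioi (0:ℝ), ENNReal.ofReal ((y + c) ^ a) = ENNReal.ofReal (-c ^ (a+1) / (a+1)) := by
  have hmp : MeasurePreserving (fun y : ℝ => y + c) volume volume :=
    measurePreserving_add_right volume c
  have hemb : MeasurableEmbedding (fun y : ℝ => y + c) :=
    (Homeomorph.addRight c).measurableEmbedding
  have h0 : (fun y : ℝ => y + c) ⁻¹' (Ioi c) = Ioi 0 := by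
    ext y; simp [mem_Ioi]
  have h1 := hmp.setLIntegral_comp_preimage_emb hemb
    (fun x => ENNReal.ofReal (x ^ a)) (Ioi c)
  rw [h0] at h1
  rw [h1, ← ofReal_integral_eq_lintegral_ofReal (integrableOn_Ioi_rpow_of_lt ha hc)
    ((ae_restrict_iff' measurableSet_Ioi).2 (ae_of_all _ fun x hx =>
      Real.rpow_nonneg (le_of_lt (hc.trans hx)) a)),
    integral_Ioi_rpow_of_lt ha hc]

theorem aux_lint_abs {b : ℝ} (hb : b < -1) {c : ℝ} (hc : 0 < c) :
    ∫⁻ x : ℝ, ENNReal.ofReal ((|x| + c) ^ b) = 2 * ENNReal.ofReal (-c ^ (b+1) / (b+1)) := by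
  have hIoi : ∫⁻ x in Ioi (0:ℝ), ENNReal.ofReal ((|x| + c) ^ b)
      = ENNReal.ofReal (-c ^ (b+1) / (b+1)) := by
    rw [setLIntegral_congr_fun (f := fun x : ℝ => ENNReal.ofReal ((|x| + c) ^ b))
      (g := fun x : ℝ => ENNReal.ofReal ((x + c) ^ b)) measurableSet_Ioi
      (fun x (hx : x ∈ Ioi (0:ℝ)) => by
      simp only [abs_of_pos (show (0:ℝ) < x from hx)])]
    exact aux_lint_shift hb hc
  have hneg : MeasurePreserving (fun y : ℝ => -y) volume volume :=
    Measure.measurePreserving_neg volume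
  have hnemb : MeasurableEmbedding (fun y : ℝ => -y) :=
    (Homeomorph.neg ℝ).measurableEmbedding
  have hIio : ∫⁻ x in Iio (0:ℝ), ENNReal.ofReal ((|x| + c) ^ b)
      = ENNReal.ofReal (-c ^ (b+1) / (b+1)) := by
    have h0 : (fun y : ℝ => -y) ⁻¹' (Iio 0) = Ioi 0 := by ext y; simp
    have h1 := hneg.setLIntegral_comp_preimage_emb hnemb
      (fun x => ENNReal.ofReal ((|x| + c) ^ b)) (Iio 0)
    rw [h0] at h1
    simp only [abs_neg] at h1
    rw [← h1]; exact hIoi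
  have hsplit : ∫⁻ x : ℝ, ENNReal.ofReal ((|x| + c) ^ b)
      = (∫⁻ x in Iio (0:ℝ), ENNReal.ofReal ((|x| + c) ^ b))
        + ∫⁻ x in Ici (0:ℝ), ENNReal.ofReal ((|x| + c) ^ b) := by
    rw [← lintegral_add_compl _ measurableSet_Iio, compl_Iio]
  have hIci : ∫⁻ x in Ici (0:ℝ), ENNReal.ofReal ((|x| + c) ^ b)
      = ∫⁻ x in Ioi (0:ℝ), ENNReal.ofReal ((|x| + c) ^ b) := by
    rw [Measure.restrict_congr_set Ioi_ae_eq_Ici.symm]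
  rw [hsplit, hIci, hIoi, hIio, two_mul]

theorem aux_lint_UHP (G : ℝ → ℝ → ℝ≥0∞) (hG : Measurable (fun p : ℝ × ℝ => G p.1 p.2)) :
    ∫⁻ z in UHP, G z.re z.im = ∫⁻ x : ℝ, ∫⁻ y in Ioi (0:ℝ), G x y := by
  have hemb := Complex.measurableEquivRealProd.measurableEmbedding
  have h0 : Complex.measurableEquivRealProd ⁻¹' (Set.univ ×ˢ Ioi (0:ℝ)) = UHP := by
    ext z
    simp [UHP, Complex.measurableEquivRealProd_apply, Set.mem_prod, mem_Ioi]
  have h1 := Complex.volume_preserving_equiv_real_prod.setLIntegral_comp_preimage_emb hemb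
    (fun p : ℝ × ℝ => G p.1 p.2) (Set.univ ×ˢ Ioi (0:ℝ))
  rw [h0] at h1
  simp only [Complex.measurableEquivRealProd_apply] at h1
  rw [h1, MeasureTheory.Measure.volume_eq_prod, ← Measure.prod_restrict, Measure.restrict_univ]
  rw [lintegral_prod _ hG.aemeasurable]

theorem aux_abs_re_add_abs_im_le (w : ℂ) :
    |w.re| + |w.im| ≤ Real.sqrt 2 * ‖w‖ := by
  have h2 : (|w.re| + |w.im|)^2 ≤ (Real.sqrt 2 * ‖w‖)^2 := by
    rw [mul_pow, Real.sq_sqrt (by norm_num : (0:ℝ) ≤ 2), Complex.sq_norm, Complex.normSq_apply]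
    nlinarith [sq_nonneg (|w.re| - |w.im|), _root_.sq_abs w.re, _root_.sq_abs w.im]
  have hnn : 0 ≤ |w.re| + |w.im| := by positivity
  have hnn2 : 0 ≤ Real.sqrt 2 * ‖w‖ := by positivity
  calc |w.re| + |w.im| = Real.sqrt ((|w.re| + |w.im|)^2) := (Real.sqrt_sq hnn).symm
    _ ≤ Real.sqrt ((Real.sqrt 2 * ‖w‖)^2) := Real.sqrt_le_sqrt h2
    _ = Real.sqrt 2 * ‖w‖ := Real.sqrt_sq hnn2

theorem stmt2 (l δ : ℝ) (hl : 0 < l) (hδ : 0 < δ) :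
    ENNReal.ofReal ((1/2 : ℝ) ^ (2 + l) * (1 / (l * δ ^ l))) ≤
      ENNReal.ofReal (1 / Real.pi) *
        (∫⁻ z in UHP, ENNReal.ofReal (‖z + δ * Complex.I‖ ^ (-(2 + l)))) ∧
    ENNReal.ofReal (1 / Real.pi) *
        (∫⁻ z in UHP, ENNReal.ofReal (‖z + δ * Complex.I‖ ^ (-(2 + l)))) ≤
      ENNReal.ofReal ((2 : ℝ) ^ ((2 + l) / 2) * (1 / (l * δ ^ l))) := by
  set a : ℝ := -(2 + l) with ha_def
  have ha1 : a < -1 := by rw [ha_def]; linarith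
  have ha0 : a ≤ 0 := by rw [ha_def]; linarith
  have hb1 : a + 1 < -1 := by rw [ha_def]; linarith
  have hδl : (0:ℝ) < δ ^ l := Real.rpow_pos_of_pos hδ l
  -- measurability of x ↦ x ^ a and x ↦ x ^ (a+1)
  have hrpow : ∀ e : ℝ, Measurable fun x : ℝ => x ^ e := fun e =>
    measurable_of_continuousOn_compl_singleton 0
      (continuousOn_id.rpow_const fun x hx => Or.inl hx)
  have hGm : Measurable fun z : ℂ => ENNReal.ofReal ((|z.re| + z.im + δ) ^ a) :=
    (((hrpow a).comp ((Complex.measurable_re.abs.add Complex.measurable_im).add_const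
      δ))).ennreal_ofReal
  have hPm : Measurable fun p : ℝ × ℝ => ENNReal.ofReal ((|p.1| + p.2 + δ) ^ a) :=
    (((hrpow a).comp ((measurable_fst.abs.add measurable_snd).add_const δ))).ennreal_ofReal
  have hIm : Measurable fun z : ℂ => ENNReal.ofReal (‖z + δ * Complex.I‖ ^ a) :=
    (((hrpow a).comp ((continuous_norm.comp
      (continuous_id.add continuous_const)).measurable))).ennreal_ofReal
  -- the comparison integral K
  have hK : ∫⁻ z in UHP, ENNReal.ofReal ((|z.re| + z.im + δ) ^ a)
      = ENNReal.ofReal (2 / (l * (1 + l) * δ ^ l)) := by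
    rw [aux_lint_UHP (fun x y => ENNReal.ofReal ((|x| + y + δ) ^ a)) hPm]
    have hinner : ∀ x : ℝ, (∫⁻ y in Ioi (0:ℝ), ENNReal.ofReal ((|x| + y + δ) ^ a))
        = ENNReal.ofReal ((|x| + δ) ^ (a+1)) * ENNReal.ofReal ((1 + l)⁻¹) := by
      intro x
      have hc : 0 < |x| + δ := by positivity
      have hE : ∀ y : ℝ, |x| + y + δ = y + (|x| + δ) := fun y => by ring
      simp_rw [hE]
      rw [aux_lint_shift ha1 hc, ← ENNReal.ofReal_mul (Real.rpow_nonneg hc.le _)]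
      congr 1
      rw [show a + 1 = -(1 + l) by rw [ha_def]; ring]
      rw [neg_div, div_neg, neg_neg, div_eq_mul_inv]
    simp_rw [hinner]
    have hfm : Measurable fun x : ℝ => ENNReal.ofReal ((|x| + δ) ^ (a+1)) :=
      ((hrpow (a+1)).comp (measurable_abs.add_const δ)).ennreal_ofReal
    rw [lintegral_mul_const _ hfm,
      aux_lint_abs hb1 hδ, show a + 1 + 1 = -l by rw [ha_def]; ring, Real.rpow_neg hδ.le]
    rw [neg_div, div_neg, neg_neg]
    have h1l : (0:ℝ) < 1 + l := by linarith
    rw [show (2 : ℝ≥0∞) = ENNReal.ofReal 2 by simp,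
      ← ENNReal.ofReal_mul (by norm_num),← ENNReal.ofReal_mul (by positivity)]
    congr 1
    field_simp
  -- pointwise bounds on UHP
  have hpt : ∀ z ∈ UHP,
      ENNReal.ofReal ((|z.re| + z.im + δ) ^ a)
        ≤ ENNReal.ofReal (‖z + δ * Complex.I‖ ^ a) ∧
      ENNReal.ofReal (‖z + δ * Complex.I‖ ^ a)
        ≤ ENNReal.ofReal ((2:ℝ) ^ ((2 + l) / 2)) *
            ENNReal.ofReal ((|z.re| + z.im + δ) ^ a) := by
    intro z hz
    have hz' : 0 < z.im := hz
    have him : (z + δ * Complex.I).im = z.im + δ := by simp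
    have hre : (z + δ * Complex.I).re = z.re := by simp
    set r := ‖z + δ * Complex.I‖ with hr_def
    set u := |z.re| + z.im + δ with hu_def
    have hzne : z + δ * Complex.I ≠ 0 := by
      intro h
      have : (z + δ * Complex.I).im = 0 := by rw [h]; simp
      rw [him] at this; linarith
    have hr0 : 0 < r := norm_pos_iff.mpr hzne
    have hu0 : 0 < u := by
      have := abs_nonneg z.re; rw [hu_def]; linarith
    have hru : r ≤ u := by
      have h := Complex.norm_le_abs_re_add_abs_im (z + δ * Complex.I)
      rw [hre, him, abs_of_pos (by linarith : (0:ℝ) < z.im + δ)] at h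
      rw [hu_def]; linarith
    have hur : u ≤ Real.sqrt 2 * r := by
      have h := aux_abs_re_add_abs_im_le (z + δ * Complex.I)
      rw [hre, him, abs_of_pos (by linarith : (0:ℝ) < z.im + δ)] at h
      rw [hu_def]; linarith
    constructor
    · exact ENNReal.ofReal_le_ofReal (Real.rpow_le_rpow_of_nonpos hr0 hru ha0)
    · have hs2 : (0:ℝ) < Real.sqrt 2 := by positivity
      have hdiv : u / Real.sqrt 2 ≤ r := (div_le_iff₀ hs2).2 (by linarith [hur])
      have h1 : r ^ a ≤ (u / Real.sqrt 2) ^ a :=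
        Real.rpow_le_rpow_of_nonpos (by positivity) hdiv ha0
      have h2 : (u / Real.sqrt 2) ^ a = (2:ℝ) ^ ((2 + l) / 2) * u ^ a := by
        rw [Real.div_rpow hu0.le (Real.sqrt_nonneg 2), Real.sqrt_eq_rpow,
          ← Real.rpow_mul (by norm_num : (0:ℝ) ≤ 2), div_eq_mul_inv,
          ← Real.rpow_neg (by norm_num : (0:ℝ) ≤ 2), mul_comm]
        congr 1
        rw [ha_def]; ring
      calc ENNReal.ofReal (r ^ a) ≤ ENNReal.ofReal ((2:ℝ) ^ ((2 + l) / 2) * u ^ a) :=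
            ENNReal.ofReal_le_ofReal (h2 ▸ h1)
        _ = ENNReal.ofReal ((2:ℝ) ^ ((2 + l) / 2)) * ENNReal.ofReal (u ^ a) :=
            ENNReal.ofReal_mul (Real.rpow_nonneg (by norm_num) _)
  -- integral comparisons
  have hlow : ENNReal.ofReal (2 / (l * (1 + l) * δ ^ l))
      ≤ ∫⁻ z in UHP, ENNReal.ofReal (‖z + δ * Complex.I‖ ^ a) := by
    rw [← hK]
    exact setLIntegral_mono hIm fun z hz => (hpt z hz).1
  have hup : (∫⁻ z in UHP, ENNReal.ofReal (‖z + δ * Complex.I‖ ^ a))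
      ≤ ENNReal.ofReal ((2:ℝ) ^ ((2 + l) / 2)) *
          ENNReal.ofReal (2 / (l * (1 + l) * δ ^ l)) := by
    rw [← hK, ← lintegral_const_mul _ hGm]
    exact setLIntegral_mono (measurable_const.mul hGm) fun z hz => (hpt z hz).2
  -- key real inequalities
  have hπ3 := Real.pi_gt_three
  have hπ4 := Real.pi_le_four
  have hE2 : Real.pi * (1 + l) ≤ 2 * 2 ^ (2 + l) := by
    have hexp : 1 + l * Real.log 2 ≤ Real.exp (l * Real.log 2) := by
      have := Real.add_one_le_exp (l * Real.log 2); linarith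
    have h2e : (2:ℝ) ^ l = Real.exp (l * Real.log 2) := by
      rw [Real.rpow_def_of_pos (by norm_num), mul_comm]
    have hlog : (0.6931471803:ℝ) < Real.log 2 := Real.log_two_gt_d9
    have h2l' : (1:ℝ) + l ≤ 2 ^ (1 + l) := by
      rw [Real.rpow_add (by norm_num : (0:ℝ) < 2), Real.rpow_one, h2e]
      nlinarith
    have h23 : 2 * (2:ℝ) ^ (2 + l) = 4 * 2 ^ (1 + l) := by
      rw [show (2:ℝ) + l = 1 + (1 + l) by ring,
        Real.rpow_add (by norm_num : (0:ℝ) < 2), Real.rpow_one]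
      ring
    calc Real.pi * (1 + l) ≤ 4 * (1 + l) := by nlinarith
      _ ≤ 4 * 2 ^ (1 + l) := by nlinarith
      _ = 2 * 2 ^ (2 + l) := h23.symm
  have h2pow : (0:ℝ) < 2 ^ (2 + l) := Real.rpow_pos_of_pos (by norm_num) _
  have hC : (0:ℝ) < (2:ℝ) ^ ((2 + l) / 2) := Real.rpow_pos_of_pos (by norm_num) _
  constructor
  · -- lower bound
    refine le_trans ?_ (mul_le_mul_right hlow _)
    rw [← ENNReal.ofReal_mul (by positivity)]
    apply ENNReal.ofReal_le_ofReal
    have hhalf : (1/2 : ℝ) ^ (2 + l) = (2 ^ (2 + l))⁻¹ := by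
      rw [one_div, Real.inv_rpow (by norm_num : (0:ℝ) ≤ 2)]
    rw [hhalf]
    rw [show (2 ^ (2+l))⁻¹ * (1 / (l * δ ^ l)) = 1 / (2 ^ (2+l) * (l * δ ^ l)) by
      field_simp]
    rw [show 1 / Real.pi * (2 / (l * (1 + l) * δ ^ l))
        = 2 / (Real.pi * (l * (1 + l) * δ ^ l)) by field_simp]
    rw [div_le_div_iff₀ (by positivity) (by positivity)]
    nlinarith [mul_le_mul_of_nonneg_right hE2 (le_of_lt (mul_pos hl hδl))]
  · -- upper bound
    refine le_trans (mul_le_mul_right hup _) ?_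
    rw [← ENNReal.ofReal_mul (by positivity), ← ENNReal.ofReal_mul (by positivity)]
    apply ENNReal.ofReal_le_ofReal
    rw [show 1 / Real.pi * ((2:ℝ) ^ ((2 + l) / 2) * (2 / (l * (1 + l) * δ ^ l)))
        = (2 * (2:ℝ) ^ ((2 + l) / 2)) / (Real.pi * (l * (1 + l) * δ ^ l)) by
      field_simp]
    rw [show (2:ℝ) ^ ((2 + l) / 2) * (1 / (l * δ ^ l))
        = (2:ℝ) ^ ((2 + l) / 2) / (l * δ ^ l) by field_simp]
    rw [div_le_div_iff₀ (by positivity) (by positivity)]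
    have h2π : (2:ℝ) ≤ Real.pi * (1 + l) := by nlinarith
    nlinarith [mul_le_mul_of_nonneg_right h2π
      (le_of_lt (mul_pos hC (mul_pos hl hδl)))]
end
end

section
/- Let 1 < p ≤ 2 and ε > 0 with 1 < 2/p + ε < 2. Then there exists a constant C(p) > 0 such that for every z in the sector A_{[π/4, π/2]} = {z ∈ 𝕌 : π/4 ≤ arg z ≤ π/2}, one has |Im f_ε(z)| > C(p) |Im φ_ε(z)| · |f_ε(z)|. In fact one may take C(p) = min{sin(aπ/2), √2/2} for any a with 2/p + ε < a < 2. -/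
open MeasureTheory Complex Set Filter
open scoped ENNReal NNReal Topology Real

noncomputable section

/-- The test function `f_ε(z) = (z + εi)^{-(2/p+ε)}` (principal branch). -/
def testf (p ε : ℝ) (z : ℂ) : ℂ := (z + ε * Complex.I) ^ ((-(2 / p + ε) : ℝ) : ℂ)

/-- The function `φ_ε(z) = conj(z + εi)/|z + εi|`. -/
def testphi (ε : ℝ) (z : ℂ) : ℂ :=
  (starRingEnd ℂ) (z + ε * Complex.I) / ((‖z + ε * Complex.I‖ : ℝ) : ℂ)

lemma key_sin (s a θ : ℝ) (hs1 : 1 < s) (hsa : s < a) (ha2 : a < 2)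
    (hθ0 : 0 < θ) (hθ2 : θ ≤ π/2) :
    min (Real.sin (a * π / 2)) (Real.sqrt 2 / 2) * Real.sin θ < Real.sin (s * θ) := by
  have hπ := Real.pi_pos
  have hsinθ0 : 0 < Real.sin θ := Real.sin_pos_of_pos_of_lt_pi hθ0 (by linarith)
  have hsinθ1 : Real.sin θ ≤ 1 := Real.sin_le_one θ
  have hsθ0 : 0 < s * θ := by positivity
  have hsθπ : s * θ < π := by nlinarith
  have hsaπ : Real.sin (a * π / 2) ≤ 1 := Real.sin_le_one _
  have hsqrt : Real.sqrt 2 < 2 := by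
    nlinarith [Real.sq_sqrt (by norm_num : (2:ℝ) ≥ 0), Real.sqrt_nonneg 2]
  rcases le_or_gt (s * θ) (π/2) with hc | hc
  · have h1 : Real.sin θ ≤ Real.sin (s * θ) := by
      rcases eq_or_lt_of_le (show θ ≤ s * θ by nlinarith) with h | h
      · rw [← h]
      · exact le_of_lt (Real.sin_lt_sin_of_lt_of_le_pi_div_two (by linarith) hc h)
    calc min (Real.sin (a * π / 2)) (Real.sqrt 2 / 2) * Real.sin θ
        ≤ (Real.sqrt 2 / 2) * Real.sin θ :=
          mul_le_mul_of_nonneg_right (min_le_right _ _) hsinθ0.le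
      _ < 1 * Real.sin θ := by nlinarith
      _ ≤ Real.sin (s * θ) := by rw [one_mul]; exact h1
  · have h2 : Real.sin (a * π / 2) < Real.sin (s * θ) := by
      rw [← Real.sin_pi_sub (a * π / 2), ← Real.sin_pi_sub (s * θ)]
      apply Real.sin_lt_sin_of_lt_of_le_pi_div_two (by nlinarith) (by linarith)
      nlinarith
    have hmin0 : 0 ≤ min (Real.sin (a * π / 2)) (Real.sqrt 2 / 2) := by
      apply le_min
      · exact (Real.sin_pos_of_pos_of_lt_pi (by nlinarith) (by nlinarith)).le
      · positivity
    calc min (Real.sin (a * π / 2)) (Real.sqrt 2 / 2) * Real.sin θ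
        ≤ min (Real.sin (a * π / 2)) (Real.sqrt 2 / 2) * 1 :=
          mul_le_mul_of_nonneg_left hsinθ1 hmin0
      _ ≤ Real.sin (a * π / 2) := by rw [mul_one]; exact min_le_left _ _
      _ < Real.sin (s * θ) := h2

theorem stmt4 (p ε : ℝ) (hp1 : 1 < p) (hp2 : p ≤ 2) (hε : 0 < ε)
    (h1 : 1 < 2 / p + ε) (h2 : 2 / p + ε < 2)
    (a : ℝ) (ha1 : 2 / p + ε < a) (ha2 : a < 2) :
    0 < min (Real.sin (a * π / 2)) (Real.sqrt 2 / 2) ∧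
    ∀ z : ℂ, 0 < z.im → π / 4 ≤ z.arg → z.arg ≤ π / 2 →
      min (Real.sin (a * π / 2)) (Real.sqrt 2 / 2) * |(testphi ε z).im| *
          ‖testf p ε z‖ < |(testf p ε z).im| := by
  have hπ := Real.pi_pos
  have hmin : 0 < min (Real.sin (a * π / 2)) (Real.sqrt 2 / 2) := by
    apply lt_min
    · exact Real.sin_pos_of_pos_of_lt_pi (by nlinarith) (by nlinarith)
    · positivity
  refine ⟨hmin, fun z hz hz1 hz2 => ?_⟩
  set s : ℝ := 2 / p + ε with hsdef
  set w : ℂ := z + ε * Complex.I with hw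
  have hwim : 0 < w.im := by
    simp only [hw, Complex.add_im, Complex.mul_im, Complex.ofReal_re, Complex.ofReal_im,
      Complex.I_re, Complex.I_im]
    nlinarith
  have hzre : 0 ≤ z.re := by
    rcases Complex.arg_le_pi_div_two_iff.mp hz2 with h | h
    · exact h
    · linarith
  have hwre : 0 ≤ w.re := by
    simp only [hw, Complex.add_re, Complex.mul_re, Complex.ofReal_re, Complex.ofReal_im,
      Complex.I_re, Complex.I_im]
    nlinarith
  have hw0 : w ≠ 0 := by
    intro h
    rw [h] at hwim
    simp at hwim
  set θ : ℝ := Complex.arg w with hθdef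
  have hθpos : 0 < θ := by
    rcases lt_or_eq_of_le (Complex.arg_nonneg_iff.mpr hwim.le) with h | h
    · exact h
    · exact absurd (Complex.arg_eq_zero_iff.mp h.symm).2 hwim.ne'
  have hθle : θ ≤ π / 2 := Complex.arg_le_pi_div_two_iff.mpr (Or.inl hwre)
  -- compute testf
  have hf : testf p ε z = Complex.exp (Complex.log w * ((-s : ℝ) : ℂ)) := by
    rw [testf, ← hw, Complex.cpow_def_of_ne_zero hw0]
  set E : ℂ := Complex.log w * ((-s : ℝ) : ℂ) with hE
  have hEim : E.im = -(s * θ) := by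
    simp [hE, Complex.mul_im, Complex.log_im, hθdef]
    ring
  have hEre0 : (0:ℝ) < Real.exp E.re := Real.exp_pos _
  have habsf : ‖testf p ε z‖ = Real.exp E.re := by
    rw [hf, Complex.norm_exp]
  have hsθpos : 0 < Real.sin (s * θ) := by
    apply Real.sin_pos_of_pos_of_lt_pi
    · positivity
    · nlinarith
  have himf : (testf p ε z).im = -(Real.exp E.re * Real.sin (s * θ)) := by
    rw [hf, Complex.exp_im, hEim, Real.sin_neg]
    ring
  -- compute testphi
  have hphi : (testphi ε z).im = -(w.im / ‖w‖) := by
    rw [testphi, ← hw, Complex.div_ofReal_im, Complex.conj_im]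
    ring
  have hsinθ : w.im / ‖w‖ = Real.sin θ := (Complex.sin_arg w).symm
  rw [himf, hphi, hsinθ, habsf, abs_neg, abs_neg,
    abs_of_pos (by positivity : (0:ℝ) < Real.exp E.re * Real.sin (s * θ)),
    abs_of_pos (Real.sin_pos_of_pos_of_lt_pi hθpos (by linarith))]
  have hkey := key_sin s a θ h1 ha1 ha2 hθpos hθle
  calc min (Real.sin (a * π / 2)) (Real.sqrt 2 / 2) * Real.sin θ * Real.exp E.re
      < Real.sin (s * θ) * Real.exp E.re := by
        exact mul_lt_mul_of_pos_right hkey hEre0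
    _ = Real.exp E.re * Real.sin (s * θ) := by ring
end
end

section
/- Let p = 1, let 0 < θ₀ < π/16 and ε > 0 satisfy (2 + ε)(π/2 + θ₀) < 5π/4. Then for every z in the sector A_{[π/2, π/2+θ₀]} = {z ∈ 𝕌 : π/2 ≤ arg z ≤ π/2 + θ₀}, one has |Re f_ε(z)| > |Re φ_ε(z)| · |f_ε(z)|, where f_ε(z) = (z + εi)^{−(2+ε)}. -/
open MeasureTheory Complex Set Filter
open scoped ENNReal NNReal Topology Real

noncomputable section

theorem stmt5 (ε θ₀ : ℝ) (hε : 0 < ε) (hθ₀ : 0 < θ₀) (hθ₁ : θ₀ < π / 16)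
    (h : (2 + ε) * (π / 2 + θ₀) < 5 * π / 4) :
    ∀ z : ℂ, 0 < z.im → π / 2 ≤ z.arg → z.arg ≤ π / 2 + θ₀ →
      |(testphi ε z).re| * ‖testf 1 ε z‖ < |(testf 1 ε z).re| := by
  intro z hz h1 h2
  have hπ := Real.pi_pos
  set w : ℂ := z + ε * Complex.I with hwdef
  have himw : w.im = z.im + ε := by simp [hwdef]
  have him : 0 < w.im := by rw [himw]; linarith
  have hw0 : w ≠ 0 := by intro hc; rw [hc] at him; simp at him
  have hz0 : z ≠ 0 := by intro hc; rw [hc] at hz; simp at hz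
  have habs : 0 < ‖w‖ := norm_pos_iff.mpr hw0
  have habsz : 0 < ‖z‖ := norm_pos_iff.mpr hz0
  have hrew : w.re = z.re := by simp [hwdef]
  have hrez : z.re ≤ 0 := by
    by_contra hc
    push_neg at hc
    have hle : z.arg ≤ π / 2 := Complex.arg_le_pi_div_two_iff.mpr (Or.inl hc.le)
    have heq : z.arg = π / 2 := le_antisymm hle h1
    have := (Complex.arg_eq_pi_div_two_iff.mp heq).1
    linarith
  have hlez : ‖z‖ ≤ ‖w‖ := by
    rw [Complex.norm_def, Complex.norm_def]
    apply Real.sqrt_le_sqrt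
    simp only [Complex.normSq_apply, hrew, himw]
    nlinarith
  have hargw : w.arg = Real.arccos (w.re / ‖w‖) := Complex.arg_of_im_pos him
  have hargz : z.arg = Real.arccos (z.re / ‖z‖) := Complex.arg_of_im_pos hz
  have ht1 : π / 2 ≤ w.arg := by
    rw [hargw, Real.arccos_eq_pi_div_two_sub_arcsin]
    have hd : w.re / ‖w‖ ≤ 0 := by
      rw [hrew]
      exact div_nonpos_of_nonpos_of_nonneg hrez habs.le
    have := Real.arcsin_nonpos.mpr hd
    linarith
  have ht2 : w.arg ≤ z.arg := by
    rw [hargw, hargz, Real.arccos_eq_pi_div_two_sub_arcsin,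
      Real.arccos_eq_pi_div_two_sub_arcsin]
    have hd : z.re / ‖z‖ ≤ w.re / ‖w‖ := by
      rw [hrew, div_le_div_iff₀ habsz habs]
      nlinarith
    have := Real.monotone_arcsin hd
    linarith
  set t := w.arg with htdef
  have ht2' : t ≤ π / 2 + θ₀ := le_trans ht2 h2
  -- values of the test functions
  have hphi : (testphi ε z).re = Real.cos t := by
    rw [htdef, Complex.cos_arg hw0, testphi, ← hwdef, Complex.div_ofReal_re]
    simp
  set c : ℝ := -(2 + ε) with hcdef
  have hf : testf 1 ε z = Complex.exp (Complex.log w * (c : ℂ)) := by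
    rw [testf, ← hwdef, show ((-(2 / 1 + ε) : ℝ) : ℂ) = ((c : ℝ) : ℂ) by norm_num [hcdef],
      Complex.cpow_def_of_ne_zero hw0]
  have hre : (Complex.log w * (c : ℂ)).re = Real.log (‖w‖) * c := by
    simp [Complex.mul_re, Complex.log_re]
  have him' : (Complex.log w * (c : ℂ)).im = t * c := by
    simp [Complex.mul_im, Complex.log_im, htdef]
  have hfre : (testf 1 ε z).re
      = Real.exp (Real.log (‖w‖) * c) * Real.cos (t * c) := by
    rw [hf, Complex.exp_re, hre, him']
  have hfabs : ‖testf 1 ε z‖ = Real.exp (Real.log (‖w‖) * c) := by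
    rw [hf, Complex.norm_exp, hre]
  set R := Real.exp (Real.log (‖w‖) * c) with hRdef
  have hR : 0 < R := Real.exp_pos _
  rw [hphi, hfre, hfabs, abs_mul, abs_of_pos hR, mul_comm (|Real.cos t|) R]
  apply mul_lt_mul_of_pos_left _ hR
  -- key inequality : |cos t| < |cos (t * c)|
  set u : ℝ := (2 + ε) * t with hudef
  have hcu : Real.cos (t * c) = Real.cos u := by
    rw [show t * c = -u by rw [hudef, hcdef]; ring, Real.cos_neg]
  have hu1 : π < u := by nlinarith
  have hu2 : u < 5 * π / 4 := by
    calc u ≤ (2 + ε) * (π / 2 + θ₀) := by nlinarith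
    _ < 5 * π / 4 := h
  have hcos_t_nonpos : Real.cos t ≤ 0 :=
    Real.cos_nonpos_of_pi_div_two_le_of_le ht1 (by linarith)
  have hcos_bound : -Real.cos t ≤ Real.sin θ₀ := by
    have hmono : Real.cos (π / 2 + θ₀) ≤ Real.cos t :=
      Real.cos_le_cos_of_nonneg_of_le_pi (by linarith) (by linarith) ht2'
    have hc2 : Real.cos (π / 2 + θ₀) = -Real.sin θ₀ := by
      simp [Real.cos_add]
    linarith
  have hsin_small : Real.sin θ₀ < Real.sqrt 2 / 2 := by
    have := Real.sin_lt_sin_of_lt_of_le_pi_div_two (x := θ₀) (y := π / 4)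
      (by linarith) (by linarith) (by linarith)
    rwa [Real.sin_pi_div_four] at this
  have hcos_u : Real.cos u < -(Real.sqrt 2 / 2) := by
    have hlt : Real.cos (2 * π - u) < Real.cos (3 * π / 4) :=
      Real.cos_lt_cos_of_nonneg_of_le_pi (x := 3 * π / 4) (y := 2 * π - u)
        (by linarith) (by linarith) (by linarith)
    rw [Real.cos_two_pi_sub] at hlt
    have h34 : Real.cos (3 * π / 4) = -(Real.sqrt 2 / 2) := by
      rw [show (3 * π / 4 : ℝ) = π - π / 4 by ring, Real.cos_pi_sub,
        Real.cos_pi_div_four]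
    linarith
  rw [hcu]
  have h1' : |Real.cos t| = -Real.cos t := abs_of_nonpos hcos_t_nonpos
  have h2' : -Real.cos u ≤ |Real.cos u| := by
    rw [← abs_neg]; exact le_abs_self _
  linarith
end
end

section
/- Let 1 ≤ p < ∞ and ε > 0, and let f_ε(z) = (z + εi)^{−(2/p+ε)} (principal branch). Then (1/2)^{2+pε} · 1/(pε · ε^{pε}) ≤ ||f_ε||_{A^p(𝕌)}^p ≤ 2^{(2+pε)/2} · 1/(pε · ε^{pε}). -/
open MeasureTheory Complex Set Filter
open scoped ENNReal NNReal Topology Real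

noncomputable section

lemma outerInt {c ε a : ℝ} (hc : 0 ≤ c) (hε : 0 < ε) (ha : 2 < a) :
    ∫⁻ y in Ioi (0:ℝ), ENNReal.ofReal (c * (y + ε) ^ (1 - a)) =
      ENNReal.ofReal (c * (ε ^ (2 - a) / (a - 2))) := by
  have h1 : ∫⁻ y in Ioi (0:ℝ), ENNReal.ofReal (c * (y + ε) ^ (1 - a)) =
      ∫⁻ y in Ioi ε, ENNReal.ofReal (c * y ^ (1 - a)) := by
    have hm := (measurePreserving_add_right (volume : Measure ℝ) ε).setLIntegral_comp_preimage_emb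
      (measurableEmbedding_addRight ε) (fun y => ENNReal.ofReal (c * y ^ (1 - a))) (Ioi ε)
    rw [preimage_add_const_Ioi, sub_self] at hm
    exact hm.symm ▸ hm
  rw [h1]
  have hint : IntegrableOn (fun y : ℝ => c * y ^ (1 - a)) (Ioi ε) := by
    exact (integrableOn_Ioi_rpow_of_lt (by linarith) hε).const_mul c
  rw [← ofReal_integral_eq_lintegral_ofReal hint ?nn]
  case nn =>
    filter_upwards [ae_restrict_mem measurableSet_Ioi] with y hy
    exact mul_nonneg hc (Real.rpow_nonneg (le_of_lt (hε.trans hy)) _)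
  congr 1
  rw [integral_const_mul, integral_Ioi_rpow_of_lt (by linarith) hε]
  congr 1
  have h2 : (1 - a) + 1 = 2 - a := by ring
  rw [h2]
  have h3 : a - 2 ≠ 0 := by linarith
  have h4 : (2:ℝ) - a ≠ 0 := by linarith
  field_simp
  ring

lemma abs_ge_s {s : ℝ} (x : ℝ) (hs : 0 < s) : s ≤ ‖(x:ℂ) + s*I‖ := by
  have h := Complex.abs_im_le_norm ((x:ℂ) + s*I)
  simpa [abs_of_pos hs] using h

lemma abs_ge_x {s : ℝ} (x : ℝ) : |x| ≤ ‖(x:ℂ) + s*I‖ := by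
  have h := Complex.abs_re_le_norm ((x:ℂ) + s*I)
  simpa using h

lemma rpow_Ioi_int {s a : ℝ} (hs : 0 < s) (ha : 2 < a) :
    ∫⁻ x in Ioi s, ENNReal.ofReal (x ^ (-a)) = ENNReal.ofReal (s ^ (1-a) / (a-1)) := by
  rw [← ofReal_integral_eq_lintegral_ofReal (integrableOn_Ioi_rpow_of_lt (by linarith) hs) ?nn]
  case nn =>
    filter_upwards [ae_restrict_mem measurableSet_Ioi] with x hx
    exact Real.rpow_nonneg (le_of_lt (hs.trans hx)) _
  congr 1
  rw [integral_Ioi_rpow_of_lt (by linarith) hs]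
  have h2 : (-a) + 1 = 1 - a := by ring
  rw [h2]
  have h3 : a - 1 ≠ 0 := by linarith
  have h4 : (1:ℝ) - a ≠ 0 := by linarith
  field_simp
  ring

lemma innerUpper {s a : ℝ} (hs : 0 < s) (ha : 2 < a) :
    ∫⁻ x : ℝ, ENNReal.ofReal (‖(x:ℂ) + s*I‖ ^ (-a)) ≤
      ENNReal.ofReal (4 * s ^ (1-a)) := by
  have hcover : (univ : Set ℝ) = Iio (-s) ∪ (Icc (-s) s ∪ Ioi s) := by
    ext x
    simp only [mem_union, mem_Iio, mem_Icc, mem_Ioi, mem_univ, true_iff]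
    rcases lt_or_ge x (-s) with h | h
    · exact Or.inl h
    rcases le_or_gt x s with h2 | h2
    · exact Or.inr (Or.inl ⟨h, h2⟩)
    · exact Or.inr (Or.inr h2)
  have hA : ∫⁻ x in Iio (-s), ENNReal.ofReal (‖(x:ℂ) + s*I‖ ^ (-a)) ≤
      ENNReal.ofReal (s ^ (1-a) / (a-1)) := by
    have h1 : ∫⁻ x in Iio (-s), ENNReal.ofReal (‖(x:ℂ) + s*I‖ ^ (-a)) ≤
        ∫⁻ x in Iio (-s), ENNReal.ofReal ((-x) ^ (-a)) := by
      refine setLIntegral_mono' measurableSet_Iio fun x hx => ?_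
      refine ENNReal.ofReal_le_ofReal ?_
      have hx' : x < -s := hx
      refine Real.rpow_le_rpow_of_nonpos (by linarith) ?_ (by linarith)
      have := abs_ge_x (s := s) x
      rwa [abs_of_neg (by linarith)] at this
    refine h1.trans ?_
    have h2 := (Measure.measurePreserving_neg (volume : Measure ℝ)).setLIntegral_comp_preimage_emb
      measurableEmbedding_neg (fun x => ENNReal.ofReal ((-x) ^ (-a))) (Iio (-s))
    have hpre : (Neg.neg ⁻¹' (Iio (-s)) : Set ℝ) = Ioi s := by
      ext x
      simp only [mem_preimage, mem_Iio, mem_Ioi]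
      constructor <;> intro h <;> linarith
    rw [hpre] at h2
    simp only [neg_neg] at h2
    rw [← h2, rpow_Ioi_int hs ha]
  have hB : ∫⁻ x in Icc (-s) s, ENNReal.ofReal (‖(x:ℂ) + s*I‖ ^ (-a)) ≤
      ENNReal.ofReal (2 * s ^ (1-a)) := by
    have h1 : ∫⁻ x in Icc (-s) s, ENNReal.ofReal (‖(x:ℂ) + s*I‖ ^ (-a)) ≤
        ∫⁻ _ in Icc (-s) s, ENNReal.ofReal (s ^ (-a)) := by
      refine setLIntegral_mono' measurableSet_Icc fun x _ => ?_
      exact ENNReal.ofReal_le_ofReal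
        (Real.rpow_le_rpow_of_nonpos hs (abs_ge_s x hs) (by linarith))
    refine h1.trans ?_
    rw [setLIntegral_const, Real.volume_Icc, ← ENNReal.ofReal_mul (Real.rpow_nonneg hs.le _)]
    refine ENNReal.ofReal_le_ofReal (le_of_eq ?_)
    have h2 : s - -s = 2 * s := by ring
    rw [h2, show (1:ℝ) - a = -a + 1 by ring, Real.rpow_add hs, Real.rpow_one]
    ring
  have hC : ∫⁻ x in Ioi s, ENNReal.ofReal (‖(x:ℂ) + s*I‖ ^ (-a)) ≤
      ENNReal.ofReal (s ^ (1-a) / (a-1)) := by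
    have h1 : ∫⁻ x in Ioi s, ENNReal.ofReal (‖(x:ℂ) + s*I‖ ^ (-a)) ≤
        ∫⁻ x in Ioi s, ENNReal.ofReal (x ^ (-a)) := by
      refine setLIntegral_mono' measurableSet_Ioi fun x hx => ?_
      refine ENNReal.ofReal_le_ofReal ?_
      have hx' : s < x := hx
      refine Real.rpow_le_rpow_of_nonpos (by linarith) ?_ (by linarith)
      have := abs_ge_x (s := s) x
      rwa [abs_of_pos (by linarith)] at this
    exact h1.trans (le_of_eq (rpow_Ioi_int hs ha))
  calc ∫⁻ x : ℝ, ENNReal.ofReal (‖(x:ℂ) + s*I‖ ^ (-a))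
      = ∫⁻ x in Iio (-s) ∪ (Icc (-s) s ∪ Ioi s),
          ENNReal.ofReal (‖(x:ℂ) + s*I‖ ^ (-a)) := by
        rw [← hcover, Measure.restrict_univ]
    _ ≤ _ + _ := lintegral_union_le _ _ _
    _ ≤ ENNReal.ofReal (s ^ (1-a) / (a-1)) +
        (ENNReal.ofReal (2 * s ^ (1-a)) + ENNReal.ofReal (s ^ (1-a) / (a-1))) :=
        add_le_add hA ((lintegral_union_le _ _ _).trans (add_le_add hB hC))
    _ ≤ ENNReal.ofReal (4 * s ^ (1-a)) := by
        have hs1 : 0 ≤ s ^ (1-a) := Real.rpow_nonneg hs.le _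
        have hd0 : 0 ≤ s ^ (1-a) / (a-1) := div_nonneg hs1 (by linarith)
        rw [← ENNReal.ofReal_add (by linarith) hd0, ← ENNReal.ofReal_add hd0 (by linarith)]
        refine ENNReal.ofReal_le_ofReal ?_
        have hd : s ^ (1-a) / (a-1) ≤ s ^ (1-a) :=
          div_le_self (Real.rpow_nonneg hs.le _) (by linarith)
        linarith

lemma innerLower {s a : ℝ} (hs : 0 < s) (ha : 2 < a) :
    ENNReal.ofReal ((2 * Real.sqrt 2 ^ (-a)) * s ^ (1-a)) ≤
      ∫⁻ x : ℝ, ENNReal.ofReal (‖(x:ℂ) + s*I‖ ^ (-a)) := by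
  have hle : ∀ x ∈ Ioo (-s) s,
      ENNReal.ofReal ((Real.sqrt 2 * s) ^ (-a)) ≤
        ENNReal.ofReal (‖(x:ℂ) + s*I‖ ^ (-a)) := by
    intro x hx
    refine ENNReal.ofReal_le_ofReal ?_
    have habs : ‖(x:ℂ) + s*I‖ ≤ Real.sqrt 2 * s := by
      rw [Complex.norm_def, Complex.normSq_apply]
      simp only [add_re, ofReal_re, mul_re, ofReal_im, I_re, I_im, mul_zero, zero_mul,
        mul_one, sub_zero, add_im, mul_im, zero_add, add_zero]
      have hx2 : x * x ≤ s * s := by nlinarith [hx.1, hx.2]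
      calc Real.sqrt (x * x + s * s) ≤ Real.sqrt (2 * (s * s)) :=
            Real.sqrt_le_sqrt (by nlinarith)
        _ = Real.sqrt 2 * s := by
            rw [Real.sqrt_mul (by norm_num), Real.sqrt_mul_self hs.le]
    exact Real.rpow_le_rpow_of_nonpos (lt_of_lt_of_le hs (abs_ge_s x hs)) habs (by linarith)
  calc ENNReal.ofReal ((2 * Real.sqrt 2 ^ (-a)) * s ^ (1-a))
      = ENNReal.ofReal ((Real.sqrt 2 * s) ^ (-a)) * volume (Ioo (-s) s) := by
        rw [Real.volume_Ioo, ← ENNReal.ofReal_mul (Real.rpow_nonneg (by positivity) _)]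
        congr 1
        rw [Real.mul_rpow (Real.sqrt_nonneg 2) hs.le,
          show (1:ℝ) - a = -a + 1 by ring, Real.rpow_add hs, Real.rpow_one]
        ring
    _ = ∫⁻ _ in Ioo (-s) s, ENNReal.ofReal ((Real.sqrt 2 * s) ^ (-a)) :=
        (setLIntegral_const _ _).symm
    _ ≤ ∫⁻ x in Ioo (-s) s, ENNReal.ofReal (‖(x:ℂ) + s*I‖ ^ (-a)) :=
        setLIntegral_mono' measurableSet_Ioo hle
    _ ≤ _ := setLIntegral_le_lintegral _ _

lemma measurableSet_UHP : MeasurableSet UHP :=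
  measurableSet_lt measurable_const Complex.measurable_im

lemma tonelliUHP (ε a : ℝ) :
    ∫⁻ z in UHP, ENNReal.ofReal (‖z + ε*I‖ ^ (-a)) =
      ∫⁻ y in Ioi (0:ℝ), ∫⁻ x : ℝ,
        ENNReal.ofReal (‖(x:ℂ) + ((y+ε):ℝ)*I‖ ^ (-a)) := by
  set G : ℝ × ℝ → ℝ≥0∞ := fun q =>
    if 0 < q.2 then ENNReal.ofReal (‖(q.1:ℂ) + ((q.2+ε):ℝ)*I‖ ^ (-a)) else 0
    with hG
  have hGm : Measurable G := by
    refine Measurable.ite (measurableSet_lt measurable_const measurable_snd) ?_ measurable_const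
    have hr : Measurable fun x : ℝ => x ^ (-a) := by measurability
    have hc : Continuous fun q : ℝ × ℝ => ‖(q.1:ℂ) + ((q.2+ε):ℝ)*I‖ := by
      apply continuous_norm.comp
      continuity
    exact ENNReal.measurable_ofReal.comp (hr.comp hc.measurable)
  have h0 : ∫⁻ z in UHP, ENNReal.ofReal (‖z + ε*I‖ ^ (-a)) =
      ∫⁻ z : ℂ, G (z.re, z.im) := by
    rw [← lintegral_indicator measurableSet_UHP]
    congr 1
    ext z
    by_cases hz : 0 < z.im
    · rw [Set.indicator_of_mem (show z ∈ UHP from hz)]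
      simp only [hG, if_pos hz]
      congr 3
      apply Complex.ext <;> simp
    · rw [Set.indicator_of_notMem (show z ∉ UHP from hz)]
      simp only [hG, if_neg hz]
  have h1 : ∫⁻ z : ℂ, G (z.re, z.im) = ∫⁻ q : ℝ × ℝ, G q :=
    Complex.volume_preserving_equiv_real_prod.lintegral_comp hGm
  have h2 : ∫⁻ q : ℝ × ℝ, G q = ∫⁻ y : ℝ, ∫⁻ x : ℝ, G (x, y) := by
    rw [Measure.volume_eq_prod, lintegral_prod_symm' G hGm]
  rw [h0, h1, h2, ← lintegral_indicator measurableSet_Ioi]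
  congr 1
  ext y
  by_cases hy : 0 < y
  · rw [Set.indicator_of_mem (show y ∈ Ioi (0:ℝ) from hy)]
    congr 1
    ext x
    simp only [hG, if_pos hy]
  · rw [Set.indicator_of_notMem (show y ∉ Ioi (0:ℝ) by simpa using hy)]
    simp only [hG, if_neg hy, lintegral_const, zero_mul]

theorem stmt12 (p ε : ℝ) (hp : 1 ≤ p) (hε : 0 < ε) :
    ENNReal.ofReal ((1/2 : ℝ) ^ (2 + p * ε) * (1 / (p * ε * ε ^ (p * ε)))) ≤
        apNormPow p (testf p ε) ∧
    apNormPow p (testf p ε) ≤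
        ENNReal.ofReal ((2 : ℝ) ^ ((2 + p * ε) / 2) * (1 / (p * ε * ε ^ (p * ε)))) := by
  have hp0 : 0 < p := lt_of_lt_of_le one_pos hp
  have ht : 0 < p * ε := mul_pos hp0 hε
  set a : ℝ := 2 + p * ε with haa
  have ha2 : 2 < a := by rw [haa]; linarith
  have hεt : 0 < ε ^ (p * ε) := Real.rpow_pos_of_pos hε _
  have hY : 0 < 1 / (p * ε * ε ^ (p * ε)) := by positivity
  have hX : ε ^ (2 - a) / (a - 2) = 1 / (p * ε * ε ^ (p * ε)) := by
    rw [show (2:ℝ) - a = -(p * ε) by rw [haa]; ring, show a - 2 = p * ε by rw [haa]; ring,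
      Real.rpow_neg hε.le]
    field_simp
  have hnorm : ∀ z : ℂ, ((‖testf p ε z‖₊ : ℝ≥0∞)) ^ p
      = ENNReal.ofReal (‖z + ε*I‖ ^ (-a)) := by
    intro z
    have h1 : ‖testf p ε z‖ = ‖z + ε*I‖ ^ (-(2/p+ε)) := by
      rw [testf, Complex.norm_cpow_real]
    rw [← enorm_eq_nnnorm, ← ofReal_norm,
      ENNReal.ofReal_rpow_of_nonneg (norm_nonneg _) (by linarith), h1,
      ← Real.rpow_mul (norm_nonneg _)]
    congr 1
    rw [haa]
    field_simp
  have hmain : apNormPow p (testf p ε) = ENNReal.ofReal (1/Real.pi) *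
      ∫⁻ y in Ioi (0:ℝ), ∫⁻ x : ℝ,
        ENNReal.ofReal (‖(x:ℂ) + ((y+ε):ℝ)*I‖ ^ (-a)) := by
    rw [apNormPow, ← tonelliUHP ε a]
    congr 1
    exact lintegral_congr fun z => hnorm z
  have hup : (∫⁻ y in Ioi (0:ℝ), ∫⁻ x : ℝ,
        ENNReal.ofReal (‖(x:ℂ) + ((y+ε):ℝ)*I‖ ^ (-a)))
      ≤ ENNReal.ofReal (4 * (ε ^ (2-a) / (a-2))) := by
    calc (∫⁻ y in Ioi (0:ℝ), ∫⁻ x : ℝ,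
          ENNReal.ofReal (‖(x:ℂ) + ((y+ε):ℝ)*I‖ ^ (-a)))
        ≤ ∫⁻ y in Ioi (0:ℝ), ENNReal.ofReal (4 * (y+ε) ^ (1-a)) := by
          refine setLIntegral_mono' measurableSet_Ioi fun y hy => ?_
          have hy' : (0:ℝ) < y := hy
          exact innerUpper (by linarith) ha2
      _ = _ := outerInt (by norm_num) hε ha2
  have hlo : ENNReal.ofReal ((2 * Real.sqrt 2 ^ (-a)) * (ε ^ (2-a) / (a-2))) ≤
      ∫⁻ y in Ioi (0:ℝ), ∫⁻ x : ℝ,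
        ENNReal.ofReal (‖(x:ℂ) + ((y+ε):ℝ)*I‖ ^ (-a)) := by
    have hc0 : (0:ℝ) ≤ 2 * Real.sqrt 2 ^ (-a) := by positivity
    calc ENNReal.ofReal ((2 * Real.sqrt 2 ^ (-a)) * (ε ^ (2-a) / (a-2)))
        = ∫⁻ y in Ioi (0:ℝ), ENNReal.ofReal ((2 * Real.sqrt 2 ^ (-a)) * (y+ε) ^ (1-a)) :=
          (outerInt hc0 hε ha2).symm
      _ ≤ _ := by
          refine setLIntegral_mono' measurableSet_Ioi fun y hy => ?_
          have hy' : (0:ℝ) < y := hy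
          exact innerLower (by linarith) ha2
  constructor
  · rw [hmain]
    refine le_trans ?_ (mul_le_mul_right hlo _)
    rw [← ENNReal.ofReal_mul (by positivity : (0:ℝ) ≤ 1/Real.pi)]
    refine ENNReal.ofReal_le_ofReal ?_
    rw [hX]
    have hsqrt : Real.sqrt 2 ^ (-a) = 2 ^ (-(a/2)) := by
      rw [Real.sqrt_eq_rpow, ← Real.rpow_mul (by norm_num : (0:ℝ) ≤ 2)]
      congr 1
      ring
    have hhalf : (1/2:ℝ) ^ a = 2 ^ (-a) := by
      rw [one_div, ← Real.rpow_neg_one 2, ← Real.rpow_mul (by norm_num : (0:ℝ) ≤ 2)]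
      congr 1
      ring
    have hkey : (1/2:ℝ) ^ a ≤ 1/Real.pi * (2 * Real.sqrt 2 ^ (-a)) := by
      rw [hhalf, hsqrt, one_div_mul_eq_div, le_div_iff₀ Real.pi_pos]
      have hsplit : (2:ℝ) ^ (-a) = 2 ^ (-(a/2)) * 2 ^ (-(a/2)) := by
        rw [← Real.rpow_add (by norm_num : (0:ℝ) < 2)]
        congr 1
        ring
      have hpos : (0:ℝ) < 2 ^ (-(a/2)) := Real.rpow_pos_of_pos (by norm_num) _
      have hhl : (2:ℝ) ^ (-(a/2)) ≤ 1/2 := by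
        calc (2:ℝ) ^ (-(a/2)) ≤ 2 ^ (-1:ℝ) :=
              Real.rpow_le_rpow_of_exponent_le one_le_two (by linarith)
          _ = 1/2 := by rw [Real.rpow_neg_one]; norm_num
      rw [hsplit]
      nlinarith [Real.pi_le_four, mul_le_mul_of_nonneg_left hhl hpos.le,
        mul_pos hpos hpos]
    calc (1/2:ℝ) ^ a * (1 / (p * ε * ε ^ (p * ε)))
        ≤ (1/Real.pi * (2 * Real.sqrt 2 ^ (-a))) * (1 / (p * ε * ε ^ (p * ε))) :=
          mul_le_mul_of_nonneg_right hkey hY.le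
      _ = 1/Real.pi * (2 * Real.sqrt 2 ^ (-a) * (1 / (p * ε * ε ^ (p * ε)))) := by ring
  · rw [hmain]
    refine le_trans (mul_le_mul_right hup _) ?_
    rw [← ENNReal.ofReal_mul (by positivity : (0:ℝ) ≤ 1/Real.pi)]
    refine ENNReal.ofReal_le_ofReal ?_
    rw [hX]
    have h2a : (2:ℝ) ≤ 2 ^ (a/2) := by
      calc (2:ℝ) = 2 ^ (1:ℝ) := (Real.rpow_one 2).symm
        _ ≤ 2 ^ (a/2) := Real.rpow_le_rpow_of_exponent_le one_le_two (by linarith)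
    have hkey : 1/Real.pi * 4 ≤ 2 ^ (a/2) := by
      have h13 : 1/Real.pi ≤ 1/3 :=
        one_div_le_one_div_of_le (by norm_num) (by linarith [Real.pi_gt_three])
      linarith
    calc 1/Real.pi * (4 * (1 / (p * ε * ε ^ (p * ε))))
        = (1/Real.pi * 4) * (1 / (p * ε * ε ^ (p * ε))) := by ring
      _ ≤ 2 ^ (a/2) * (1 / (p * ε * ε ^ (p * ε))) :=
          mul_le_mul_of_nonneg_right hkey hY.le
end
end
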